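/- Let Λ be a full lattice in ℝⁿ and let H ≤ GL(n,ℝ) be a subgroup with h(Λ) = Λ for every h ∈ H. Then the right action of H on the coset space O(n)\GL(n,ℝ) by right multiplication is properly discontinuous: for every compact subset U ⊆ O(n)\GL(n,ℝ), the set {h ∈ H | U·h ∩ U ≠ ∅} is finite. -/

import Mathlib

open Matrix

/-- The orthogonal group `O(n)` as a subgroup of `GL(n,ℝ)`. -/
def On (n : ℕ) : Subgroup (GL (Fin n) ℝ) where
  carrier := {A | (A : Matrix (Fin n) (Fin n) ℝ) ∈ Matrix.orthogonalGroup (Fin n) ℝ}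
  one_mem' := by
    simp only [Set.mem_setOf_eq, Units.val_one]
    exact one_mem _
  mul_mem' := by
    intro a b ha hb
    simp only [Set.mem_setOf_eq, Units.val_mul] at *
    exact mul_mem ha hb
  inv_mem' := by
    intro a ha
    simp only [Set.mem_setOf_eq] at *
    have h1 : (a : Matrix (Fin n) (Fin n) ℝ) * star (a : Matrix (Fin n) (Fin n) ℝ) = 1 :=
      Unitary.mul_star_self_of_mem ha
    rw [Units.inv_eq_of_mul_eq_one_right h1]
    exact Unitary.star_mem ha

/-- The right action of `B : GL(n,ℝ)` on the coset space `O(n)\GL(n,ℝ)`: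
`(O(n)A)·B = O(n)(AB)`. -/
def rightCosetMul (n : ℕ) (B : GL (Fin n) ℝ) :
    Quotient (QuotientGroup.rightRel (On n)) → Quotient (QuotientGroup.rightRel (On n)) :=
  Quotient.map (· * B) (fun a b hab =>
    QuotientGroup.rightRel_apply.mpr
      (by simpa [mul_assoc] using QuotientGroup.rightRel_apply.mp hab))

lemma locallyCompactGL (n : ℕ) : LocallyCompactSpace (GL (Fin n) ℝ) := by
  set M := Matrix (Fin n) (Fin n) ℝ with hM
  haveI : LocallyCompactSpace M := (inferInstance : LocallyCompactSpace (Fin n → Fin n → ℝ))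
  haveI : LocallyCompactSpace Mᵐᵒᵖ :=
    MulOpposite.opHomeomorph.symm.isClosedEmbedding.locallyCompactSpace
  have hc1 : Continuous fun p : M × Mᵐᵒᵖ => p.1 * p.2.unop :=
    continuous_fst.mul (MulOpposite.continuous_unop.comp continuous_snd)
  have hc2 : Continuous fun p : M × Mᵐᵒᵖ => p.2.unop * p.1 :=
    (MulOpposite.continuous_unop.comp continuous_snd).mul continuous_fst
  have hcl : IsClosed (Set.range (Units.embedProduct M)) := by
    have h1 : IsClosed {p : M × Mᵐᵒᵖ | p.1 * p.2.unop = 1 ∧ p.2.unop * p.1 = 1} :=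
      (isClosed_eq hc1 continuous_const).inter (isClosed_eq hc2 continuous_const)
    convert h1 using 1
    ext p
    constructor
    · rintro ⟨u, rfl⟩
      simp [Units.embedProduct]
    · rintro ⟨h1, h2⟩
      exact ⟨⟨p.1, p.2.unop, h1, h2⟩, by simp [Units.embedProduct]⟩
  exact (Topology.IsClosedEmbedding.mk Units.isEmbedding_embedProduct hcl).locallyCompactSpace

lemma isOpenMap_mkRight (n : ℕ) :
    IsOpenMap (Quotient.mk (QuotientGroup.rightRel (On n))) := by
  intro V hV
  rw [← (isQuotientMap_quotient_mk' (s := QuotientGroup.rightRel (On n))).isOpen_preimage]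
  have : Quot.mk _ ⁻¹' (Quotient.mk (QuotientGroup.rightRel (On n)) '' V)
      = ⋃ c : On n, (fun g => (c : GL (Fin n) ℝ) * g) '' V := by
    ext x
    simp only [Set.mem_preimage, Set.mem_image, Set.mem_iUnion]
    constructor
    · rintro ⟨v, hv, hvx⟩
      have h2 := QuotientGroup.rightRel_apply.mp (Quotient.exact hvx)
      exact ⟨⟨x * v⁻¹, h2⟩, v, hv, by group⟩
    · rintro ⟨c, v, hv, rfl⟩
      exact ⟨v, hv, Quotient.sound (QuotientGroup.rightRel_apply.mpr (by simpa using c.2))⟩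
  refine (congrArg IsOpen this).mpr ?_
  exact isOpen_iUnion fun c => (Homeomorph.mulLeft (c : GL (Fin n) ℝ)).isOpenMap V hV

lemma compact_lift {X Y : Type*} [TopologicalSpace X] [TopologicalSpace Y]
    [LocallyCompactSpace X] {f : X → Y} (hopen : IsOpenMap f)
    (hsurj : Function.Surjective f) {U : Set Y} (hU : IsCompact U) :
    ∃ K : Set X, IsCompact K ∧ U ⊆ f '' K := by
  choose x hx using hsurj
  have h1 : ∀ u : Y, ∃ N : Set X, IsCompact N ∧ N ∈ nhds (x u) :=
    fun u => exists_compact_mem_nhds (x u)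
  choose N hNc hNn using h1
  have hnhds : ∀ u ∈ U, f '' N u ∈ nhds u := fun u _ => by
    have := hopen.image_mem_nhds (hNn u)
    rwa [hx u] at this
  obtain ⟨t, -, hsub⟩ := hU.elim_nhds_subcover (fun u => f '' N u) hnhds
  refine ⟨⋃ u ∈ t, N u, t.isCompact_biUnion (fun u _ => hNc u), hsub.trans ?_⟩
  rw [Set.image_iUnion₂]

lemma compact_orth (n : ℕ) :
    IsCompact {A : Matrix (Fin n) (Fin n) ℝ | A * star A = 1} := by
  have hclosed : IsClosed {A : Matrix (Fin n) (Fin n) ℝ | A * star A = 1} :=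
    isClosed_eq (continuous_id.matrix_mul continuous_id.matrix_conjTranspose) continuous_const
  have hsub : {A : Matrix (Fin n) (Fin n) ℝ | A * star A = 1} ⊆
      (Set.pi Set.univ fun _ : Fin n => Set.pi Set.univ fun _ : Fin n => Set.Icc (-1:ℝ) 1) := by
    intro A hA i _ j _
    simp only [Set.mem_setOf_eq] at hA
    have h1 : (A * star A) i i = 1 := by rw [hA]; simp [Matrix.one_apply]
    rw [Matrix.mul_apply] at h1
    have h2 : ∑ k, A i k * (star A) k i = ∑ k, A i k ^ 2 :=
      Finset.sum_congr rfl fun k _ => by simp [Matrix.star_apply, sq]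
    have h3 : A i j ^ 2 ≤ 1 := by
      rw [← h1, h2]
      exact Finset.single_le_sum (f := fun k => A i k ^ 2) (fun k _ => sq_nonneg _)
        (Finset.mem_univ j)
    exact abs_le.mp ((sq_le_one_iff_abs_le_one (A i j)).mp h3)
  exact (((isCompact_univ_pi) fun _ =>
    (isCompact_univ_pi fun _ => isCompact_Icc)).of_isClosed_subset hclosed hsub)

lemma finite_lattice_inter (n : ℕ) (Λ : AddSubgroup (Fin n → ℝ))
    (hdisc : DiscreteTopology ↥Λ)
    (hspan : Submodule.span ℝ (Λ : Set (Fin n → ℝ)) = ⊤)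
    {Q : Set (Matrix (Fin n) (Fin n) ℝ)} (hQ : IsCompact Q) :
    ({A : Matrix (Fin n) (Fin n) ℝ | ∀ v ∈ Λ, A.mulVec v ∈ Λ} ∩ Q).Finite := by
  classical
  obtain ⟨t, hts, htsp, hli⟩ := exists_linearIndependent ℝ (Λ : Set (Fin n → ℝ))
  haveI : Finite ↥t := hli.setFinite
  rw [hspan] at htsp
  let b : Module.Basis ↥t ℝ (Fin n → ℝ) := Module.Basis.mk hli (by rw [Subtype.range_coe, htsp])
  set Ψ : Matrix (Fin n) (Fin n) ℝ → (↥t → (Fin n → ℝ)) :=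
    fun A i => A.mulVec i.1 with hΨ
  have hΨc : Continuous Ψ :=
    continuous_pi fun i => continuous_id.matrix_mulVec continuous_const
  have hΨinj : Function.Injective Ψ := by
    intro A B hAB
    have : Matrix.toLin' A = Matrix.toLin' B := by
      apply b.ext
      intro i
      have := congrFun hAB i
      simpa [Matrix.toLin'_apply, b, Module.Basis.mk_apply] using this
    exact Matrix.toLin'.injective this
  haveI := hdisc
  have hΛclosed : IsClosed (Λ : Set (Fin n → ℝ)) := AddSubgroup.isClosed_of_discrete
  have himg : (Ψ '' ({A | ∀ v ∈ Λ, A.mulVec v ∈ Λ} ∩ Q)).Finite := by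
    have hsub : Ψ '' ({A | ∀ v ∈ Λ, A.mulVec v ∈ Λ} ∩ Q) ⊆
        {f : ↥t → (Fin n → ℝ) |
          ∀ i, f i ∈ (Λ : Set (Fin n → ℝ)) ∩ ((fun f => f i) '' (Ψ '' Q))} := by
      rintro f ⟨A, ⟨hAS, hAQ⟩, rfl⟩ i
      exact ⟨hAS _ (hts i.2), ⟨Ψ A, Set.mem_image_of_mem Ψ hAQ, rfl⟩⟩
    refine (Set.Finite.pi' fun i => ?_).subset hsub
    have hcomp : IsCompact ((Λ : Set (Fin n → ℝ)) ∩ ((fun f => f i) '' (Ψ '' Q))) :=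
      (((hQ.image hΨc).image (continuous_apply i))).inter_left hΛclosed
    refine hcomp.finite ?_
    exact ⟨DiscreteTopology.of_subset (s := (Λ : Set (Fin n → ℝ))) hdisc Set.inter_subset_left⟩
  exact Set.Finite.of_finite_image himg hΨinj.injOn

theorem stmt9 (n : ℕ) (Λ : AddSubgroup (Fin n → ℝ))
    (hdisc : DiscreteTopology ↥Λ)
    (hspan : Submodule.span ℝ (Λ : Set (Fin n → ℝ)) = ⊤)
    (H : Subgroup (GL (Fin n) ℝ))
    (hΛ : ∀ h ∈ H, ∀ v : Fin n → ℝ, v ∈ Λ ↔ (h : Matrix (Fin n) (Fin n) ℝ).mulVec v ∈ Λ)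
    (U : Set (Quotient (QuotientGroup.rightRel (On n)))) (hU : IsCompact U) :
    {h : ↥H | ∃ u ∈ U, rightCosetMul n (↑h : GL (Fin n) ℝ) u ∈ U}.Finite := by
  classical
  haveI : LocallyCompactSpace (GL (Fin n) ℝ) := locallyCompactGL n
  set π : GL (Fin n) ℝ → Quotient (QuotientGroup.rightRel (On n)) :=
    Quotient.mk (QuotientGroup.rightRel (On n)) with hπ
  have hsurj : Function.Surjective π := fun q => ⟨q.out, q.out_eq⟩
  obtain ⟨K, hKc, hUK⟩ := compact_lift (isOpenMap_mkRight n) hsurj hU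
  have hKinv : IsCompact ((fun g : GL (Fin n) ℝ => g⁻¹) '' K) := hKc.image continuous_inv
  have hKL : IsCompact (Units.val '' ((fun g : GL (Fin n) ℝ => g⁻¹) '' K)) :=
    hKinv.image Units.continuous_val
  have hKR : IsCompact (Units.val '' K) := hKc.image Units.continuous_val
  set Q : Set (Matrix (Fin n) (Fin n) ℝ) :=
    (fun p : Matrix (Fin n) (Fin n) ℝ × Matrix (Fin n) (Fin n) ℝ × Matrix (Fin n) (Fin n) ℝ =>
      p.1 * p.2.1 * p.2.2) ''
      ((Units.val '' ((fun g : GL (Fin n) ℝ => g⁻¹) '' K)) ×ˢ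
        ({A : Matrix (Fin n) (Fin n) ℝ | A * star A = 1} ×ˢ (Units.val '' K))) with hQdef
  have hQ : IsCompact Q :=
    (hKL.prod ((compact_orth n).prod hKR)).image
      ((continuous_fst.mul (continuous_fst.comp continuous_snd)).mul
        (continuous_snd.comp continuous_snd))
  have hfin := finite_lattice_inter n Λ hdisc hspan hQ
  set f : ↥H → Matrix (Fin n) (Fin n) ℝ := fun h => ((h : GL (Fin n) ℝ) : Matrix (Fin n) (Fin n) ℝ)
    with hf
  have hinj : Function.Injective f := fun h h' hh => Subtype.ext (Units.ext hh)
  have hsubset : f '' {h : ↥H | ∃ u ∈ U, rightCosetMul n (↑h : GL (Fin n) ℝ) u ∈ U} ⊆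
      {A : Matrix (Fin n) (Fin n) ℝ | ∀ v ∈ Λ, A.mulVec v ∈ Λ} ∩ Q := by
    rintro _ ⟨h, ⟨u, huU, huh⟩, rfl⟩
    constructor
    · exact fun v hv => (hΛ _ h.2 v).mp hv
    · obtain ⟨a, haK, ha⟩ := hUK huU
      rw [← ha] at huh
      have heq : rightCosetMul n (↑h : GL (Fin n) ℝ) (π a) = π (a * ↑h) := rfl
      rw [heq] at huh
      obtain ⟨b, hbK, hb⟩ := hUK huh
      have hc : a * (↑h : GL (Fin n) ℝ) * b⁻¹ ∈ On n :=
        QuotientGroup.rightRel_apply.mp (Quotient.exact hb)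
      have hO : ((a * (↑h : GL (Fin n) ℝ) * b⁻¹ : GL (Fin n) ℝ) : Matrix (Fin n) (Fin n) ℝ) *
          star ((a * (↑h : GL (Fin n) ℝ) * b⁻¹ : GL (Fin n) ℝ) : Matrix (Fin n) (Fin n) ℝ) = 1 := by
        have hc' : ((a * (↑h : GL (Fin n) ℝ) * b⁻¹ : GL (Fin n) ℝ) : Matrix (Fin n) (Fin n) ℝ)
            ∈ unitary (Matrix (Fin n) (Fin n) ℝ) := hc
        exact (Unitary.mem_iff.mp hc').2
      have hh : ((↑h : GL (Fin n) ℝ) : Matrix (Fin n) (Fin n) ℝ) =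
          ((a⁻¹ : GL (Fin n) ℝ) : Matrix (Fin n) (Fin n) ℝ) *
          ((a * (↑h : GL (Fin n) ℝ) * b⁻¹ : GL (Fin n) ℝ) : Matrix (Fin n) (Fin n) ℝ) *
          ((b : GL (Fin n) ℝ) : Matrix (Fin n) (Fin n) ℝ) := by
        rw [← Units.val_mul, ← Units.val_mul]
        congr 1
        group
      refine ⟨(((a⁻¹ : GL (Fin n) ℝ) : Matrix (Fin n) (Fin n) ℝ),
        ((a * (↑h : GL (Fin n) ℝ) * b⁻¹ : GL (Fin n) ℝ) : Matrix (Fin n) (Fin n) ℝ),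
        ((b : GL (Fin n) ℝ) : Matrix (Fin n) (Fin n) ℝ)), ⟨?_, ?_, ?_⟩, hh.symm⟩
      · exact ⟨a⁻¹, ⟨a, haK, rfl⟩, rfl⟩
      · exact hO
      · exact ⟨b, hbK, rfl⟩
  exact Set.Finite.of_finite_image (hfin.subset hsubset) hinj.injOn
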